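/- For all integers k ≥ 3, n ≥ 3, and real C > 0, if p = C·n^{-2/(k+1)} ≤ 1/2, then the probability that the binomial random graph G(n,p) contains no clique on k+1 vertices is greater than exp(-C^{binom(k+1,2)}·n). -/

import Mathlib

open Finset


lemma my_harris {α : Type*} [BooleanAlgebra α] [Fintype α] (μ f g : α → ℝ)
    (hμ₀ : ∀ a, 0 ≤ μ a) (hf₀ : ∀ a, 0 ≤ f a) (hg₀ : ∀ a, 0 ≤ g a)
    (hf : Antitone f) (hg : Antitone g)
    (hμ : ∀ a b, μ a * μ b ≤ μ (a ⊓ b) * μ (a ⊔ b)) :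
    (∑ a, μ a * f a) * ∑ a, μ a * g a ≤ (∑ a, μ a) * ∑ a, μ a * (f a * g a) := by
  classical
  have key := fkg (μ := fun a => μ aᶜ) (f := fun a => f aᶜ) (g := fun a => g aᶜ)
    (fun a => hμ₀ aᶜ) (fun a => hf₀ aᶜ) (fun a => hg₀ aᶜ)
    (fun a b hab => hf (compl_le_compl hab)) (fun a b hab => hg (compl_le_compl hab))
    (fun a b => by simpa [compl_inf, compl_sup, mul_comm] using hμ aᶜ bᶜ)
  have r1 : ∀ (F : α → ℝ), (∑ a, F aᶜ) = ∑ a, F a := fun F =>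
    Fintype.sum_equiv (compl_involutive.toPerm _) _ _ (fun a => rfl)
  simpa [r1 (fun a => μ a * f a), r1 (fun a => μ a * g a), r1 μ,
    r1 (fun a => μ a * (f a * g a))] using key

lemma my_harris_prod {α ι : Type*} [BooleanAlgebra α] [Fintype α] (μ : α → ℝ)
    (hμ₀ : ∀ a, 0 ≤ μ a) (hμ1 : ∑ a, μ a = 1)
    (hμ : ∀ a b, μ a * μ b ≤ μ (a ⊓ b) * μ (a ⊔ b))
    (𝒯 : Finset ι) (g : ι → α → ℝ)
    (hg0 : ∀ i a, 0 ≤ g i a) (hganti : ∀ i, Antitone (g i)) :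
    ∏ i ∈ 𝒯, (∑ a, μ a * g i a) ≤ ∑ a, μ a * ∏ i ∈ 𝒯, g i a := by
  classical
  induction 𝒯 using Finset.cons_induction with
  | empty => simp [hμ1]
  | cons i s hi ih =>
    rw [Finset.prod_cons]
    have hprod0 : ∀ a, 0 ≤ ∏ j ∈ s, g j a := fun a => Finset.prod_nonneg fun j _ => hg0 j a
    have hprodanti : Antitone (fun a => ∏ j ∈ s, g j a) := fun a b hab =>
      Finset.prod_le_prod (fun j _ => hg0 j b) (fun j _ => hganti j hab)
    have h1 := my_harris μ (g i) (fun a => ∏ j ∈ s, g j a) hμ₀ (hg0 i) hprod0 (hganti i)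
      hprodanti hμ
    calc (∑ a, μ a * g i a) * ∏ j ∈ s, (∑ a, μ a * g j a)
        ≤ (∑ a, μ a * g i a) * ∑ a, μ a * ∏ j ∈ s, g j a :=
          mul_le_mul_of_nonneg_left ih
            (Finset.sum_nonneg fun a _ => mul_nonneg (hμ₀ a) (hg0 i a))
      _ ≤ (∑ a, μ a) * ∑ a, μ a * (g i a * ∏ j ∈ s, g j a) := h1
      _ = ∑ a, μ a * ∏ j ∈ Finset.cons i s hi, g j a := by
          rw [hμ1, one_mul]
          exact Finset.sum_congr rfl fun a _ => by rw [Finset.prod_cons]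

lemma binom_sum {β : Type*} [DecidableEq β] (p : ℝ) (F : Finset β) :
    ∑ S ∈ F.powerset, p ^ S.card * (1 - p) ^ (F.card - S.card) = 1 := by
  have h := Finset.prod_add (fun _ : β => p) (fun _ => 1 - p) F
  simp only [Finset.prod_const] at h
  calc ∑ S ∈ F.powerset, p ^ S.card * (1 - p) ^ (F.card - S.card)
      = ∑ S ∈ F.powerset, p ^ S.card * (1 - p) ^ (F \ S).card :=
        Finset.sum_congr rfl fun S hS => by rw [Finset.card_sdiff_of_subset (Finset.mem_powerset.1 hS)]
    _ = (p + (1 - p)) ^ F.card := h.symm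
    _ = 1 := by norm_num

lemma binom_sum_subset {β : Type*} [DecidableEq β] (p : ℝ) (F D : Finset β) (hD : D ⊆ F) :
    ∑ S ∈ F.powerset, (if D ⊆ S then p ^ S.card * (1 - p) ^ (F.card - S.card) else 0)
      = p ^ D.card := by
  rw [Finset.sum_ite, Finset.sum_const_zero, add_zero]
  have key : ∑ S ∈ (F.powerset.filter (fun S => D ⊆ S)),
      p ^ S.card * (1 - p) ^ (F.card - S.card)
      = ∑ U ∈ (F \ D).powerset, p ^ D.card * (p ^ U.card * (1 - p) ^ ((F \ D).card - U.card)) := by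
    refine Finset.sum_nbij' (fun S => S \ D) (fun U => U ∪ D) ?_ ?_ ?_ ?_ ?_
    · intro S hS
      simp only [Finset.mem_filter, Finset.mem_powerset] at hS
      exact Finset.mem_powerset.2 (Finset.sdiff_subset_sdiff hS.1 le_rfl)
    · intro U hU
      simp only [Finset.mem_powerset] at hU
      refine Finset.mem_filter.2 ⟨Finset.mem_powerset.2 (Finset.union_subset
        (hU.trans Finset.sdiff_subset) hD), Finset.subset_union_right⟩
    · intro S hS
      simp only [Finset.mem_filter, Finset.mem_powerset] at hS
      exact Finset.sdiff_union_of_subset hS.2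
    · intro U hU
      simp only [Finset.mem_powerset] at hU
      have : Disjoint U D := Finset.disjoint_of_subset_left hU Finset.sdiff_disjoint
      rw [Finset.union_sdiff_right, Finset.sdiff_eq_self_of_disjoint this]
    · intro S hS
      simp only [Finset.mem_filter, Finset.mem_powerset] at hS
      have hDS : D.card ≤ S.card := Finset.card_le_card hS.2
      have hSF : S.card ≤ F.card := Finset.card_le_card hS.1
      have hDF : D.card ≤ F.card := Finset.card_le_card hD
      have h1 : (S \ D).card = S.card - D.card := Finset.card_sdiff_of_subset hS.2
      have h2 : (F \ D).card = F.card - D.card := Finset.card_sdiff_of_subset hD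
      simp only [h1, h2]
      have e1 : S.card = D.card + (S.card - D.card) := by omega
      have e2 : F.card - S.card = (F.card - D.card) - (S.card - D.card) := by omega
      rw [e2, ← mul_assoc, ← pow_add, ← e1]
  rw [key, ← Finset.mul_sum, binom_sum, mul_one]

variable {n k : ℕ}

private noncomputable def DD (n : ℕ) (T : Finset (Fin n)) : Finset (Sym2 (Fin n)) :=
  ((⊤ : SimpleGraph (Fin n)).edgeFinset).filter (fun e => ∀ v ∈ e, v ∈ T)

lemma DD_subset (T : Finset (Fin n)) : DD n T ⊆ (⊤ : SimpleGraph (Fin n)).edgeFinset :=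
  Finset.filter_subset _ _

lemma mem_DD {T : Finset (Fin n)} {u v : Fin n} :
    s(u, v) ∈ DD n T ↔ (u ≠ v ∧ (u ∈ T ∧ v ∈ T)) := by
  simp only [DD, Finset.mem_filter, SimpleGraph.mem_edgeFinset, SimpleGraph.mem_edgeSet,
    SimpleGraph.top_adj, Sym2.mem_iff]
  constructor
  · rintro ⟨h1, h2⟩
    exact ⟨h1, h2 u (Or.inl rfl), h2 v (Or.inr rfl)⟩
  · rintro ⟨h1, h2, h3⟩
    refine ⟨h1, ?_⟩
    rintro w (rfl | rfl) <;> assumption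

lemma cliquefree_iff (S : Finset (Sym2 (Fin n))) :
    (SimpleGraph.fromEdgeSet (S : Set (Sym2 (Fin n)))).CliqueFree (k + 1) ↔
      ∀ T : Finset (Fin n), T.card = k + 1 → ¬ DD n T ⊆ S := by
  constructor
  · intro hcf T hT hDS
    apply hcf T
    refine ⟨?_, hT⟩
    intro u hu v hv huv
    rw [SimpleGraph.fromEdgeSet_adj]
    exact ⟨hDS (mem_DD.2 ⟨huv, hu, hv⟩), huv⟩
  · intro h T hclique
    refine h T hclique.2 ?_
    intro e he
    induction e using Sym2.ind with
    | _ u v =>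
      obtain ⟨huv, hu, hv⟩ := mem_DD.1 he
      have := hclique.1 hu hv huv
      rw [SimpleGraph.fromEdgeSet_adj] at this
      exact this.1

lemma DD_card_ge (T : Finset (Fin n)) (hT : T.card = k + 1) :
    (k + 1).choose 2 ≤ (DD n T).card := by
  classical
  have hcard : ((⊤ : SimpleGraph {x // x ∈ T}).edgeFinset).card = (k + 1).choose 2 := by
    rw [SimpleGraph.card_edgeFinset_top_eq_card_choose_two, Fintype.card_coe, hT]
  rw [← hcard]
  apply Finset.card_le_card_of_injOn (Sym2.map Subtype.val)
  · intro e he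
    induction e using Sym2.ind with
    | _ u v =>
      rw [Finset.mem_coe, SimpleGraph.mem_edgeFinset, SimpleGraph.mem_edgeSet, SimpleGraph.top_adj] at he
      rw [Sym2.map_pair_eq]
      exact mem_DD.2 ⟨fun h => he (Subtype.val_injective h), u.2, v.2⟩
  · exact (Sym2.map.injective Subtype.val_injective).injOn


open Classical in
/-- Probability of the event `A` for the binomial random graph `G(n,p)`,
modeled as a random subset of the edge set of the complete graph on `Fin n`. -/
noncomputable def gnpProb (n : ℕ) (p : ℝ) (A : Finset (Sym2 (Fin n)) → Prop) : ℝ :=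
  ∑ S ∈ ((⊤ : SimpleGraph (Fin n)).edgeFinset).powerset,
    if A S then
      p ^ S.card * (1 - p) ^ (((⊤ : SimpleGraph (Fin n)).edgeFinset).card - S.card)
    else 0

/-- For all integers `k ≥ 3`, `n ≥ 3` and real `C > 0`, if `p = C·n^(-2/(k+1)) ≤ 1/2`, then
the probability that `G(n,p)` contains no clique on `k+1` vertices exceeds
`exp(-C^(binom(k+1,2))·n)`. -/
theorem stmt0 (k n : ℕ) (hk : 3 ≤ k) (hn : 3 ≤ n) (C : ℝ) (hC : 0 < C) (p : ℝ)
    (hp : p = C * (n : ℝ) ^ (-(2 : ℝ) / ((k : ℝ) + 1))) (hp2 : p ≤ 1 / 2) :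
    Real.exp (-(C ^ ((k + 1).choose 2) * (n : ℝ))) <
      gnpProb n p
        (fun S => (SimpleGraph.fromEdgeSet (S : Set (Sym2 (Fin n)))).CliqueFree (k + 1)) := by
  classical
  have hn0 : (0:ℝ) < (n:ℝ) := by exact_mod_cast (by omega : 0 < n)
  have hp0 : 0 < p := hp ▸ mul_pos hC (Real.rpow_pos_of_pos hn0 _)
  have h1p : (0:ℝ) < 1 - p := by linarith
  set E := (⊤ : SimpleGraph (Fin n)).edgeFinset with hE
  set B := (k + 1).choose 2 with hB
  have hBpos : 0 < B := Nat.choose_pos (by omega)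
  set w : Finset (Sym2 (Fin n)) → ℝ := fun S => p ^ S.card * (1 - p) ^ (E.card - S.card) with hw
  set μ : Finset (Sym2 (Fin n)) → ℝ := fun S => if S ⊆ E then w S else 0 with hμdef
  have hw0 : ∀ S, 0 ≤ w S := fun S => mul_nonneg (pow_nonneg hp0.le _) (pow_nonneg h1p.le _)
  have hμ0 : ∀ S, 0 ≤ μ S := fun S => by
    simp only [hμdef]; split <;> [exact hw0 S; exact le_rfl]
  have hfilt : Finset.univ.filter (fun S : Finset (Sym2 (Fin n)) => S ⊆ E) = E.powerset := by
    ext S; simp [Finset.mem_powerset]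
  have hsum_ite : ∀ f : Finset (Sym2 (Fin n)) → ℝ,
      (∑ S : Finset (Sym2 (Fin n)), if S ⊆ E then f S else 0) = ∑ S ∈ E.powerset, f S := by
    intro f
    rw [← hfilt, Finset.sum_filter]
  have hμ1 : ∑ S : Finset (Sym2 (Fin n)), μ S = 1 := by
    simp only [hμdef]
    rw [hsum_ite w, hw]
    exact binom_sum p E
  have hμsup : ∀ a b : Finset (Sym2 (Fin n)), μ a * μ b ≤ μ (a ⊓ b) * μ (a ⊔ b) := by
    intro a b
    by_cases ha : a ⊆ E
    · by_cases hb : b ⊆ E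
      · have hab1 : a ⊓ b ⊆ E := (Finset.inter_subset_left).trans ha
        have hab2 : a ⊔ b ⊆ E := Finset.union_subset ha hb
        rw [hμdef]
        simp only [if_pos ha, if_pos hb, if_pos hab1, if_pos hab2]
        have h1 : (a ∩ b).card + (a ∪ b).card = a.card + b.card :=
          Finset.card_inter_add_card_union a b
        have h2 : a.card ≤ E.card := Finset.card_le_card ha
        have h3 : b.card ≤ E.card := Finset.card_le_card hb
        have h4 : (a ∪ b).card ≤ E.card := Finset.card_le_card hab2
        have h5 : (a ∩ b).card ≤ E.card := Finset.card_le_card hab1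
        have e1 : a.card + b.card = (a ⊓ b).card + (a ⊔ b).card := by
          simp only [Finset.inf_eq_inter, Finset.sup_eq_union]; omega
        have e2 : (E.card - a.card) + (E.card - b.card)
            = (E.card - (a ⊓ b).card) + (E.card - (a ⊔ b).card) := by
          simp only [Finset.inf_eq_inter, Finset.sup_eq_union]; omega
        refine le_of_eq ?_
        calc w a * w b = p ^ (a.card + b.card)
              * (1 - p) ^ ((E.card - a.card) + (E.card - b.card)) := by
              rw [pow_add, pow_add, hw]; ring
          _ = p ^ ((a ⊓ b).card + (a ⊔ b).card)
              * (1 - p) ^ ((E.card - (a ⊓ b).card) + (E.card - (a ⊔ b).card)) := by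
              rw [e1, e2]
          _ = w (a ⊓ b) * w (a ⊔ b) := by rw [pow_add, pow_add, hw]; ring
      · have : μ b = 0 := by simp [hμdef, hb]
        rw [this, mul_zero]
        exact mul_nonneg (hμ0 _) (hμ0 _)
    · have : μ a = 0 := by simp [hμdef, ha]
      rw [this, zero_mul]
      exact mul_nonneg (hμ0 _) (hμ0 _)
  set fam := Finset.powersetCard (k + 1) (Finset.univ : Finset (Fin n)) with hfam
  set g : Finset (Fin n) → Finset (Sym2 (Fin n)) → ℝ :=
    fun T S => if DD n T ⊆ S then 0 else 1 with hg
  have hg0 : ∀ T S, 0 ≤ g T S := fun T S => by simp only [hg]; split <;> norm_num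
  have hganti : ∀ T, Antitone (g T) := by
    intro T a b hab
    simp only [hg]
    by_cases h2 : DD n T ⊆ a
    · have hb' : DD n T ⊆ b := h2.trans (Finset.le_iff_subset.1 hab)
      simp [h2, hb']
    · rw [if_neg h2]
      split <;> norm_num
  -- indicator identity
  have hind : ∀ S : Finset (Sym2 (Fin n)),
      (if (SimpleGraph.fromEdgeSet (S : Set (Sym2 (Fin n)))).CliqueFree (k + 1)
        then (1:ℝ) else 0) = ∏ T ∈ fam, g T S := by
    intro S
    by_cases hA : (SimpleGraph.fromEdgeSet (S : Set (Sym2 (Fin n)))).CliqueFree (k + 1)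
    · rw [if_pos hA]
      refine (Finset.prod_eq_one fun T hT => ?_).symm
      simp only [hg]
      exact if_neg ((cliquefree_iff S).1 hA T (Finset.mem_powersetCard_univ.1 hT))
    · rw [if_neg hA]
      rw [cliquefree_iff] at hA
      push_neg at hA
      obtain ⟨T, hT1, hT2⟩ := hA
      refine (Finset.prod_eq_zero (Finset.mem_powersetCard_univ.2 hT1) ?_).symm
      simp only [hg]
      exact if_pos hT2
  -- rewrite gnpProb
  have hgnp : gnpProb n p
      (fun S => (SimpleGraph.fromEdgeSet (S : Set (Sym2 (Fin n)))).CliqueFree (k + 1))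
      = ∑ S : Finset (Sym2 (Fin n)), μ S * ∏ T ∈ fam, g T S := by
    rw [gnpProb]
    rw [show (∑ S : Finset (Sym2 (Fin n)), μ S * ∏ T ∈ fam, g T S)
        = ∑ S : Finset (Sym2 (Fin n)), (if S ⊆ E then
            (if (SimpleGraph.fromEdgeSet (S : Set (Sym2 (Fin n)))).CliqueFree (k + 1)
              then w S else 0) else 0) from Finset.sum_congr rfl fun S _ => by
          rw [← hind S]
          simp only [hμdef]
          split_ifs <;> ring]
    rw [hsum_ite]
  -- per-clique factor
  have hfac : ∀ T : Finset (Fin n), T.card = k + 1 →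
      (1 - p ^ B) ≤ ∑ S : Finset (Sym2 (Fin n)), μ S * g T S := by
    intro T hT
    have hsplit : ∀ S, μ S * g T S = μ S - (if DD n T ⊆ S then μ S else 0) := by
      intro S
      simp only [hg, hμdef]
      split_ifs <;> ring
    rw [Finset.sum_congr rfl fun S _ => hsplit S, Finset.sum_sub_distrib, hμ1]
    have hDE : DD n T ⊆ E := DD_subset T
    have hindsum : (∑ S : Finset (Sym2 (Fin n)), if DD n T ⊆ S then μ S else 0)
        = p ^ (DD n T).card := by
      rw [show (∑ S : Finset (Sym2 (Fin n)), if DD n T ⊆ S then μ S else 0)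
          = ∑ S : Finset (Sym2 (Fin n)), (if S ⊆ E then (if DD n T ⊆ S then w S else 0) else 0)
          from Finset.sum_congr rfl fun S _ => by simp only [hμdef]; split_ifs <;> rfl]
      rw [hsum_ite]
      exact binom_sum_subset p E (DD n T) hDE
    rw [hindsum]
    have hcard : B ≤ (DD n T).card := DD_card_ge T hT
    have : p ^ (DD n T).card ≤ p ^ B :=
      pow_le_pow_of_le_one hp0.le (by linarith) hcard
    linarith
  -- Harris
  have hmain := my_harris_prod μ hμ0 hμ1 hμsup fam g hg0 hganti
  set x := p ^ B with hx
  have hx0 : 0 < x := pow_pos hp0 B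
  have hxhalf : x ≤ 1 / 2 := by
    calc x ≤ p := pow_le_of_le_one hp0.le (by linarith) hBpos.ne'
    _ ≤ 1 / 2 := hp2
  have hfactor0 : (0:ℝ) ≤ 1 - x := by linarith
  set M := n.choose (k + 1) with hM
  have hfamcard : fam.card = M := by
    rw [hfam, Finset.card_powersetCard, Finset.card_univ, Fintype.card_fin]
  have hprodge : (1 - x) ^ M ≤ ∏ T ∈ fam, (∑ S : Finset (Sym2 (Fin n)), μ S * g T S) := by
    rw [← hfamcard, ← Finset.prod_const]
    exact Finset.prod_le_prod (fun T _ => hfactor0)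
      (fun T hT => hfac T (Finset.mem_powersetCard_univ.1 hT))
  have hge : (1 - x) ^ M ≤ gnpProb n p
      (fun S => (SimpleGraph.fromEdgeSet (S : Set (Sym2 (Fin n)))).CliqueFree (k + 1)) := by
    rw [hgnp]
    exact hprodge.trans hmain
  -- numeric part
  have hexpx : Real.exp (-(2 * x)) ≤ 1 - x := by
    have h1 : 1 + 2 * x ≤ Real.exp (2 * x) := by
      have := Real.add_one_le_exp (2 * x)
      linarith
    have h2 : Real.exp (-(2 * x)) * Real.exp (2 * x) = 1 := by
      rw [← Real.exp_add]; norm_num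
    nlinarith [Real.exp_pos (-(2 * x)), Real.exp_pos (2 * x)]
  have hexpM : Real.exp (-(2 * x * M)) ≤ (1 - x) ^ M := by
    have : Real.exp (-(2 * x * M)) = Real.exp (-(2 * x)) ^ M := by
      rw [← Real.exp_nat_mul]; ring_nf
    rw [this]
    exact pow_le_pow_left₀ (Real.exp_pos _).le hexpx M
  -- strict comparison
  have hMnat : 2 * M < n ^ (k + 1) := by
    rcases Nat.eq_zero_or_pos M with h0 | hMpos
    · rw [h0]; exact Nat.pow_pos (by omega)
    · have h1 : n.descFactorial (k + 1) ≤ n ^ (k + 1) := Nat.descFactorial_le_pow n (k + 1)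
      have h2 : n.descFactorial (k + 1) = Nat.factorial (k + 1) * M := by
        rw [hM, Nat.descFactorial_eq_factorial_mul_choose]
      have h3 : 24 ≤ Nat.factorial (k + 1) := by
        calc 24 = Nat.factorial 4 := by norm_num [Nat.factorial]
        _ ≤ Nat.factorial (k + 1) := Nat.factorial_le (by omega)
      calc 2 * M < 24 * M := by omega
      _ ≤ Nat.factorial (k + 1) * M := Nat.mul_le_mul_right M h3
      _ ≤ n ^ (k + 1) := by omega
  have hnk : (0:ℝ) < (n:ℝ) ^ k := by positivity
  have hxval : x = C ^ B * ((n:ℝ) ^ k)⁻¹ := by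
    have hB2 : 2 * B = (k + 1) * k := by
      rw [hB, Nat.choose_two_right]
      simp only [Nat.add_sub_cancel]
      have : Even ((k + 1) * k) := by
        rw [mul_comm]; exact Nat.even_mul_succ_self k
      have h2 : 2 ∣ (k + 1) * k := this.two_dvd
      omega
    have hrB : (-(2:ℝ) / ((k:ℝ) + 1)) * (B:ℕ) = -(k:ℝ) := by
      have hk1 : ((k:ℝ) + 1) ≠ 0 := by positivity
      have hB2' : (2:ℝ) * B = ((k:ℝ) + 1) * k := by exact_mod_cast hB2
      field_simp
      linarith
    rw [hx, hp, mul_pow, ← Real.rpow_natCast ((n:ℝ) ^ (-(2:ℝ) / ((k:ℝ) + 1))) B,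
      ← Real.rpow_mul hn0.le, hrB, Real.rpow_neg hn0.le, Real.rpow_natCast]
  have hstrict : 2 * x * M < C ^ B * n := by
    rw [hxval]
    have hcast : ((2 * M : ℕ) : ℝ) < ((n ^ (k + 1) : ℕ) : ℝ) := by exact_mod_cast hMnat
    push_cast at hcast
    have hCB : (0:ℝ) < C ^ B := pow_pos hC B
    rw [show 2 * (C ^ B * ((n:ℝ) ^ k)⁻¹) * M = C ^ B * (2 * M) / (n:ℝ) ^ k by ring,
      div_lt_iff₀ hnk]
    calc C ^ B * (2 * ↑M) < C ^ B * (n:ℝ) ^ (k + 1) := by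
          exact (mul_lt_mul_iff_right₀ hCB).2 (by exact_mod_cast hcast)
      _ = C ^ B * ↑n * (n:ℝ) ^ k := by ring
  calc Real.exp (-(C ^ B * ↑n)) < Real.exp (-(2 * x * ↑M)) :=
        Real.exp_lt_exp.2 (by linarith)
    _ ≤ (1 - x) ^ M := hexpM
    _ ≤ _ := hge
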